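/- Let μ be a probability measure on ℝ supported in [−C, C] with mean μ̃, and let 0 < α ≤ β. Then for every measurable q : ℝ → [α, β], the weighted mean m(q) = (∫ y·q dμ)/(∫ q dμ) satisfies |m(q) − μ̃| ≤ 2C·(β − α)/β. -/

import Mathlib

open MeasureTheory

/-- For measurable `q : ℝ → [α, β]` with `0 < α ≤ β`, the weighted mean deviates from the
mean `μ̃` by at most `2C(β − α)/β`. -/
theorem stmt_18 (μ : Measure ℝ) [IsProbabilityMeasure μ] (C : ℝ) (hC : 0 < C)
    (hsupp : ∀ᵐ y ∂μ, y ∈ Set.Icc (-C) C)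
    (α β : ℝ) (hα : 0 < α) (hαβ : α ≤ β)
    (q : ℝ → ℝ) (hq : Measurable q) (hqb : ∀ y, q y ∈ Set.Icc α β) :
    |(∫ y, y * q y ∂μ) / (∫ y, q y ∂μ) - ∫ y, y ∂μ| ≤ 2 * C * (β - α) / β := by
  have hβ : (0:ℝ) < β := lt_of_lt_of_le hα hαβ
  have hq_int : Integrable q μ := by
    refine Integrable.mono' (integrable_const β) hq.aestronglyMeasurable ?_
    filter_upwards with y
    have h := hqb y
    rw [Real.norm_eq_abs, abs_of_pos (lt_of_lt_of_le hα h.1)]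
    exact h.2
  have hy_int : Integrable (fun y : ℝ => y) μ := by
    refine Integrable.mono' (integrable_const C) measurable_id.aestronglyMeasurable ?_
    filter_upwards [hsupp] with y hy
    rw [Real.norm_eq_abs, abs_le]; exact ⟨hy.1, hy.2⟩
  have hyq_int : Integrable (fun y => y * q y) μ := by
    refine Integrable.mono' (integrable_const (C * β)) (measurable_id.mul hq).aestronglyMeasurable ?_
    filter_upwards [hsupp] with y hy
    rw [Real.norm_eq_abs, abs_mul]
    have h1 : |y| ≤ C := abs_le.2 ⟨hy.1, hy.2⟩
    have h2 : |q y| ≤ β := by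
      rw [abs_of_pos (lt_of_lt_of_le hα (hqb y).1)]; exact (hqb y).2
    exact mul_le_mul h1 h2 (abs_nonneg _) hC.le
  set mt := ∫ y, y ∂μ with hmt
  set D := ∫ y, q y ∂μ with hD
  set N := ∫ y, y * q y ∂μ with hN
  have hDα : α ≤ D := by
    have := integral_mono (integrable_const α) hq_int (fun y => (hqb y).1)
    simpa using this
  have hDβ : D ≤ β := by
    have := integral_mono hq_int (integrable_const β) (fun y => (hqb y).2)
    simpa using this
  have hDpos : 0 < D := lt_of_lt_of_le hα hDα
  have hmtC : |mt| ≤ C := by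
    have h := norm_integral_le_of_norm_le_const (μ := μ) (f := fun y : ℝ => y) (C := C) ?_
    · simpa using h
    · filter_upwards [hsupp] with y hy
      rw [Real.norm_eq_abs]; exact abs_le.2 ⟨hy.1, hy.2⟩
  have hnum_int : Integrable (fun y => (y - mt) * (q y - α)) μ := by
    refine Integrable.mono' (integrable_const (2 * C * (β - α)))
      ((measurable_id.sub measurable_const).mul (hq.sub measurable_const)).aestronglyMeasurable ?_
    filter_upwards [hsupp] with y hy
    rw [Real.norm_eq_abs, abs_mul]
    have hqa : (0:ℝ) ≤ q y - α := sub_nonneg.2 (hqb y).1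
    rw [abs_of_nonneg hqa]
    have h2C : |y - mt| ≤ 2 * C := by
      calc |y - mt| ≤ |y| + |mt| := abs_sub _ _
        _ ≤ C + C := add_le_add (abs_le.2 ⟨hy.1, hy.2⟩) hmtC
        _ = 2 * C := by ring
    exact mul_le_mul h2C (sub_le_sub_right (hqb y).2 α) hqa (by linarith)
  have hint : ∫ y, (y - mt) * (q y - α) ∂μ = N - mt * D := by
    have i1 : Integrable (fun y : ℝ => α * y) μ := hy_int.const_mul α
    have i2 : Integrable (fun y : ℝ => mt * q y) μ := hq_int.const_mul mt
    have i4 : Integrable (fun y : ℝ => mt * q y - mt * α) μ := i2.sub (integrable_const _)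
    have i3 : Integrable (fun y : ℝ => α * y + (mt * q y - mt * α)) μ := i1.add i4
    have e : ∀ y : ℝ, (y - mt) * (q y - α) = y * q y - (α * y + (mt * q y - mt * α)) :=
      fun y => by ring
    rw [integral_congr_ae (Filter.Eventually.of_forall e),
      integral_sub hyq_int i3, integral_add i1 i4,
      integral_sub i2 (integrable_const _), integral_const_mul, integral_const_mul,
      integral_const]
    simp only [measure_univ, probReal_univ, ENNReal.toReal_one, smul_eq_mul, one_mul, ← hmt, ← hD, ← hN]
    ring
  have hbound_int : Integrable (fun y => 2 * C * (q y - α)) μ :=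
    (hq_int.sub (integrable_const α)).const_mul _
  have habs : |∫ y, (y - mt) * (q y - α) ∂μ| ≤ 2 * C * (D - α) := by
    have hmono : ∫ y, |(y - mt) * (q y - α)| ∂μ ≤ ∫ y, 2 * C * (q y - α) ∂μ := by
      refine integral_mono_ae hnum_int.abs hbound_int ?_
      filter_upwards [hsupp] with y hy
      rw [abs_mul]
      have hqa : (0:ℝ) ≤ q y - α := sub_nonneg.2 (hqb y).1
      rw [abs_of_nonneg hqa]
      have h2C : |y - mt| ≤ 2 * C := by
        calc |y - mt| ≤ |y| + |mt| := abs_sub _ _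
          _ ≤ C + C := add_le_add (abs_le.2 ⟨hy.1, hy.2⟩) hmtC
          _ = 2 * C := by ring
      exact mul_le_mul_of_nonneg_right h2C hqa
    have h1 : |∫ y, (y - mt) * (q y - α) ∂μ| ≤ ∫ y, |(y - mt) * (q y - α)| ∂μ := by
      simpa only [Real.norm_eq_abs] using
        norm_integral_le_integral_norm (μ := μ) (f := fun y => (y - mt) * (q y - α))
    have h2 : ∫ y, 2 * C * (q y - α) ∂μ = 2 * C * (D - α) := by
      rw [integral_const_mul, integral_sub hq_int (integrable_const α), integral_const]
      simp [← hD]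
    linarith [hmono]
  have hkey : N / D - mt = (N - mt * D) / D := by
    field_simp
  rw [hkey, abs_div, abs_of_pos hDpos, ← hint]
  calc |∫ y, (y - mt) * (q y - α) ∂μ| / D ≤ 2 * C * (D - α) / D := by gcongr
    _ ≤ 2 * C * (β - α) / β := by
        rw [div_le_div_iff₀ hDpos hβ]
        nlinarith [mul_nonneg (mul_nonneg hC.le hα.le) (sub_nonneg.2 hDβ)]
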